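/- Let G be a finite simple connected graph of order at least 2. Then rrad(G) ≤ rdiam(G) ≤ rrad(G) + diam(G), where diam(G) is the diameter of G. -/

import Mathlib

open SimpleGraph

variable {V : Type*}

/-- `S` is a resolving set of `G`. -/
def IsResolving (G : SimpleGraph V) (S : Set V) : Prop :=
  ∀ x y : V, x ≠ y → ∃ z ∈ S, G.dist z x ≠ G.dist z y

/-- `S` is a connected resolving set of `G`. -/
def IsConnResolving (G : SimpleGraph V) (S : Set V) : Prop :=
  IsResolving G S ∧ (G.induce S).Connected

/-- The metric dimension of `G`. -/
noncomputable def metricDim (G : SimpleGraph V) : ℕ :=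
  sInf {n | ∃ S : Set V, IsResolving G S ∧ S.ncard = n}

/-- The connected metric dimension of `G`. -/
noncomputable def cdim (G : SimpleGraph V) : ℕ :=
  sInf {n | ∃ S : Set V, IsConnResolving G S ∧ S.ncard = n}

/-- The connected metric dimension of `G` at a vertex `v`. -/
noncomputable def cdimAt (G : SimpleGraph V) (v : V) : ℕ :=
  sInf {n | ∃ S : Set V, IsConnResolving G S ∧ v ∈ S ∧ S.ncard = n}

/-- The resolving radius of `G`: the minimum of `cdim_G(v)` over all vertices `v`. -/
noncomputable def rrad (G : SimpleGraph V) : ℕ :=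
  sInf {n | ∃ v : V, cdimAt G v = n}

/-- The resolving diameter of `G`: the maximum of `cdim_G(v)` over all vertices `v`. -/
noncomputable def rdiam (G : SimpleGraph V) : ℕ :=
  sSup {n | ∃ v : V, cdimAt G v = n}

/-- The diameter of `G`: the maximum of `d(x,y)` over all pairs of vertices. -/
noncomputable def graphDiam (G : SimpleGraph V) : ℕ :=
  sSup {n | ∃ x y : V, G.dist x y = n}

lemma univ_connResolving (G : SimpleGraph V) (hG : G.Connected) :
    IsConnResolving G Set.univ := by
  constructor
  · intro x y hxy
    refine ⟨x, Set.mem_univ x, ?_⟩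
    rw [SimpleGraph.dist_self]
    exact (((hG x y).pos_dist_of_ne hxy).ne').symm
  · exact ((induceUnivIso G).connected_iff).mpr hG

theorem cdimAt_set_nonempty (G : SimpleGraph V) (hG : G.Connected) [Fintype V] (v : V) :
    {n | ∃ S : Set V, IsConnResolving G S ∧ v ∈ S ∧ S.ncard = n}.Nonempty :=
  ⟨Set.univ.ncard, Set.univ, univ_connResolving G hG, Set.mem_univ v, rfl⟩

lemma cdimAt_le_add_dist (G : SimpleGraph V) (hG : G.Connected) [Fintype V] (u v : V) :
    cdimAt G v ≤ cdimAt G u + G.dist v u := by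
  classical
  obtain ⟨S, ⟨hSres, hSconn⟩, huS, hScard⟩ :
      ∃ S : Set V, IsConnResolving G S ∧ u ∈ S ∧ S.ncard = cdimAt G u :=
    Nat.sInf_mem (cdimAt_set_nonempty G hG u)
  obtain ⟨p, hp⟩ := hG.exists_walk_length_eq_dist v u
  set T : Set V := S ∪ {x | x ∈ p.support} with hTdef
  have hres : IsResolving G T := by
    intro x y hxy
    obtain ⟨z, hz, hzd⟩ := hSres x y hxy
    exact ⟨z, Or.inl hz, hzd⟩
  have hconn : (G.induce T).Connected :=
    induce_union_connected hSconn.preconnected p.connected_induce_support.preconnected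
      ⟨u, huS, p.end_mem_support⟩
  have hvT : v ∈ T := Or.inr p.start_mem_support
  have hTeq : T = S ∪ ({x | x ∈ p.support} \ {u}) := by
    ext x
    constructor
    · rintro (h | h)
      · exact Or.inl h
      · by_cases hx : x = u
        · exact Or.inl (hx ▸ huS)
        · exact Or.inr ⟨h, hx⟩
    · rintro (h | ⟨h, -⟩)
      · exact Or.inl h
      · exact Or.inr h
  have hcoe : ({x | x ∈ p.support} \ {u} : Set V) = ↑(p.support.toFinset.erase u) := by
    ext x; simp [and_comm]
  have hbound : ({x | x ∈ p.support} \ {u} : Set V).ncard ≤ G.dist v u := by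
    rw [hcoe, Set.ncard_coe_finset,
      Finset.card_erase_of_mem (by simp [p.end_mem_support])]
    have h1 : p.support.toFinset.card ≤ p.support.length := List.toFinset_card_le _
    have h2 : p.support.length = p.length + 1 := p.length_support
    omega
  calc cdimAt G v ≤ T.ncard := Nat.sInf_le ⟨T, ⟨hres, hconn⟩, hvT, rfl⟩
    _ ≤ S.ncard + ({x | x ∈ p.support} \ {u} : Set V).ncard := by
        rw [hTeq]; exact Set.ncard_union_le _ _
    _ ≤ cdimAt G u + G.dist v u := by rw [hScard]; exact Nat.add_le_add le_rfl hbound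

/-- For a finite simple connected graph `G` of order at least 2,
`rrad(G) ≤ rdiam(G) ≤ rrad(G) + diam(G)`. -/
theorem stmt_6 {V : Type*} [Fintype V] (G : SimpleGraph V) (hG : G.Connected)
    (hn : 2 ≤ Fintype.card V) :
    rrad G ≤ rdiam G ∧ rdiam G ≤ rrad G + graphDiam G := by
  have hne : Nonempty V := Fintype.card_pos_iff.mp (by omega)
  obtain ⟨v0⟩ := hne
  have hvals : {n | ∃ v : V, cdimAt G v = n} = Set.range (cdimAt G) := by
    ext n; simp [Set.range, eq_comm]
  have hbdd : BddAbove {n | ∃ v : V, cdimAt G v = n} := by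
    rw [hvals]; exact (Set.finite_range _).bddAbove
  have hdvals : {n | ∃ x y : V, G.dist x y = n}
      = Set.range (fun q : V × V => G.dist q.1 q.2) := by
    ext n; constructor
    · rintro ⟨x, y, h⟩; exact ⟨(x, y), h⟩
    · rintro ⟨⟨x, y⟩, h⟩; exact ⟨x, y, h⟩
  have hdbdd : BddAbove {n | ∃ x y : V, G.dist x y = n} := by
    rw [hdvals]; exact (Set.finite_range _).bddAbove
  have hvne : {n | ∃ v : V, cdimAt G v = n}.Nonempty := ⟨cdimAt G v0, v0, rfl⟩
  constructor
  · exact le_trans (Nat.sInf_le ⟨v0, rfl⟩) (le_csSup hbdd ⟨v0, rfl⟩)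
  · apply csSup_le hvne
    rintro n ⟨v, rfl⟩
    obtain ⟨u, hu⟩ : ∃ u : V, cdimAt G u = rrad G := Nat.sInf_mem hvne
    calc cdimAt G v ≤ cdimAt G u + G.dist v u := cdimAt_le_add_dist G hG u v
      _ ≤ rrad G + graphDiam G := by
          rw [hu]
          exact Nat.add_le_add le_rfl (le_csSup hdbdd ⟨v, u, rfl⟩)
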